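/- Let F, F̃ be finitely supported sequences ℤ → ℂ whose supports lie entirely to the left of the supports of the finitely supported sequences G, G̃ (every element of supp F ∪ supp F̃ is strictly smaller than every element of supp G ∪ supp G̃). Let (a,b), (ã,b̃), (c,d), (c̃,d̃) be the SU(2) nonlinear Fourier series of F, F̃, G, G̃ respectively. Then ρ((a,b)(c,d), (ã,b̃)(c̃,d̃)) ≤ 2·ρ((a,b),(ã,b̃)) + 2·ρ((c,d),(c̃,d̃)). -/

import Mathlib

open MeasureTheory Filter
open scoped ENNReal

noncomputable section

/-- The SU(2) NLFT factor `(1+|F n|²)^{-1/2} · [[1, F n zⁿ],[−conj(F n) z⁻ⁿ, 1]]`. -/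
def nlftFactor (F : ℤ → ℂ) (n : ℤ) (z : ℂ) : Matrix (Fin 2) (Fin 2) ℂ :=
  (((Real.sqrt (1 + ‖F n‖ ^ 2))⁻¹ : ℝ) : ℂ) •
    !![1, F n * z ^ n; -(starRingEnd ℂ (F n)) * z ^ (-n), 1]

/-- Ordered product of the NLFT factors for `-K ≤ n ≤ K`. -/
def nlftPartial (F : ℤ → ℂ) (K : ℕ) (z : ℂ) : Matrix (Fin 2) (Fin 2) ℂ :=
  (((List.range (2 * K + 1)).map (fun j => nlftFactor F ((j : ℤ) - (K : ℤ)) z)).prod)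

open Classical in
/-- A bound for the support of a finitely supported sequence. -/
def suppBound (F : ℤ → ℂ) : ℕ :=
  if h : (Function.support F).Finite then h.toFinset.sup (fun n => n.natAbs) else 0

/-- The SU(2) nonlinear Fourier series of a finitely supported sequence `F : ℤ → ℂ`,
evaluated at `z`: the ordered product over increasing `n` of the factors
`(1+|F n|²)^{-1/2} · [[1, F n zⁿ],[−conj(F n) z⁻ⁿ, 1]]`. -/
def nlft (F : ℤ → ℂ) (z : ℂ) : Matrix (Fin 2) (Fin 2) ℂ := nlftPartial F (suppBound F) z

/-- First entry `a(z)` of the nonlinear Fourier series. -/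
def nlftA (F : ℤ → ℂ) (z : ℂ) : ℂ := nlft F z 0 0

/-- Second entry `b(z)` of the nonlinear Fourier series. -/
def nlftB (F : ℤ → ℂ) (z : ℂ) : ℂ := nlft F z 0 1

/-- The star `c*(z) = conj (c (1/conj z))`. -/
def starFun (f : ℂ → ℂ) (z : ℂ) : ℂ := starRingEnd ℂ (f ((starRingEnd ℂ z)⁻¹))

/-- Parametrization of the unit circle. -/
def circMap (θ : ℝ) : ℂ := Complex.exp (2 * Real.pi * Complex.I * θ)

/-- Normalized Lebesgue measure on a fundamental domain for the circle. -/
def circMeas : Measure ℝ := volume.restrict (Set.Ioc (0:ℝ) 1)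

/-- `n`-th Fourier coefficient of a function on the unit circle. -/
def circCoeff (f : ℂ → ℂ) (n : ℤ) : ℂ :=
  ∫ θ in (0:ℝ)..1, f (circMap θ) * Complex.exp (-(2 * Real.pi * Complex.I * n * θ))

/-- `L²(𝕋)` distance between two functions on the unit circle. -/
def circL2dist (f g : ℂ → ℂ) : ℝ :=
  Real.sqrt (∫ θ in (0:ℝ)..1, ‖f (circMap θ) - g (circMap θ)‖ ^ 2)

/-- Measurability of a function on the unit circle. -/
def CircMeasurable (f : ℂ → ℂ) : Prop := Measurable fun θ : ℝ => f (circMap θ)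

/-- The nonlinear Fourier series of `F` as a pair `(a,b)`. -/
def nlftPair (F : ℤ → ℂ) : (ℂ → ℂ) × (ℂ → ℂ) := (nlftA F, nlftB F)

/-- Product of pairs: `(a,b)(c,d) = (ac − b d*, ad + b c*)`. -/
def pairProd (p q : (ℂ → ℂ) × (ℂ → ℂ)) : (ℂ → ℂ) × (ℂ → ℂ) :=
  (fun z => p.1 z * q.1 z - p.2 z * starFun q.2 z,
   fun z => p.1 z * q.2 z + p.2 z * starFun q.1 z)

/-- The metric `ρ((a,b),(c,d)) = ‖a−c‖_{L²(𝕋)} + ‖b−d‖_{L²(𝕋)} + |log a(∞) − log c(∞)|`,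
where the value at `∞` is the mean over the circle. -/
def rhoDist (p q : (ℂ → ℂ) × (ℂ → ℂ)) : ℝ :=
  circL2dist p.1 q.1 + circL2dist p.2 q.2 +
    |Real.log ‖circCoeff p.1 0‖ - Real.log ‖circCoeff q.1 0‖|

/-- `f` is a Laurent polynomial with coefficients `u`. -/
def HasRep (f : ℂ → ℂ) (u : ℤ → ℂ) : Prop :=
  ∃ T : Finset ℤ, (∀ k, k ∉ T → u k = 0) ∧ ∀ z : ℂ, z ≠ 0 → f z = ∑ k ∈ T, u k * z ^ k

lemma HasRep.congr {f g : ℂ → ℂ} {u : ℤ → ℂ} (h : HasRep f u) (hfg : ∀ z, z ≠ 0 → f z = g z) :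
    HasRep g u := by
  obtain ⟨T, h0, hs⟩ := h
  exact ⟨T, h0, fun z hz => (hfg z hz) ▸ hs z hz⟩

lemma HasRep.sum_eq {f : ℂ → ℂ} {u : ℤ → ℂ} (h : HasRep f u) (T : Finset ℤ)
    (hT : ∀ k, k ∉ T → u k = 0) {z : ℂ} (hz : z ≠ 0) : f z = ∑ k ∈ T, u k * z ^ k := by
  obtain ⟨T₀, h0, hs⟩ := h
  rw [hs z hz]
  trans (∑ k ∈ T ∪ T₀, u k * z ^ k)
  · exact Finset.sum_subset Finset.subset_union_right
      (fun x _ hx => by rw [h0 x hx, zero_mul])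
  · exact (Finset.sum_subset Finset.subset_union_left
      (fun x _ hx => by rw [hT x hx, zero_mul])).symm

/-- The key step lemma : multiply by `c`, add `w * z^n` times another Laurent polynomial. -/
lemma rep_step {f g : ℂ → ℂ} {u v : ℤ → ℂ} (hf : HasRep f u) (hg : HasRep g v) (c w : ℂ)
    (n : ℤ) :
    HasRep (fun z => c * (f z + w * z ^ n * g z)) (fun k => c * (u k + w * v (k - n))) := by
  obtain ⟨T, hT0, hTs⟩ := hf
  obtain ⟨S, hS0, hSs⟩ := hg
  refine ⟨T ∪ S.image (· + n), fun k hk => ?_, fun z hz => ?_⟩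
  · have h1 : u k = 0 := hT0 k (fun h => hk (Finset.mem_union_left _ h))
    have h2 : v (k - n) = 0 := by
      apply hS0
      intro h
      exact hk (Finset.mem_union_right _ (Finset.mem_image.2 ⟨k - n, h, by ring⟩))
    simp only [h1, h2, mul_zero, add_zero, mul_zero]
  · have key : ∀ k ∉ (T ∪ S.image (· + n)), u k = 0 ∧ v (k - n) = 0 := by
      intro k hk
      refine ⟨hT0 k (fun h => hk (Finset.mem_union_left _ h)), hS0 _ (fun h => ?_)⟩
      exact hk (Finset.mem_union_right _ (Finset.mem_image.2 ⟨k - n, h, by ring⟩))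
    dsimp only
    have e1 : f z = ∑ k ∈ T ∪ S.image (· + n), u k * z ^ k :=
      HasRep.sum_eq ⟨T, hT0, hTs⟩ _ (fun k hk => (key k hk).1) hz
    have e2 : g z = ∑ k ∈ S, v k * z ^ k := HasRep.sum_eq ⟨S, hS0, hSs⟩ _ hS0 hz
    have e4 : ∑ k ∈ T ∪ S.image (· + n), (w * v (k - n)) * z ^ k
        = ∑ k ∈ S, w * z ^ n * (v k * z ^ k) := by
      rw [← Finset.sum_subset (Finset.subset_union_right (s₁ := T) (s₂ := S.image (· + n)))
        (fun x _ hx2 => ?_)]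
      · rw [Finset.sum_image (fun a _ b _ h => by omega)]
        apply Finset.sum_congr rfl
        intro k _
        rw [add_sub_cancel_right, zpow_add₀ hz]
        ring
      · by_cases hvx : v (x - n) = 0
        · rw [hvx]; ring
        · exact absurd (Finset.mem_image.2 ⟨x - n, by_contra (fun h => hvx (hS0 _ h)), by ring⟩) hx2
    rw [e1, e2]
    rw [show (∑ k ∈ T ∪ S.image (· + n), c * (u k + w * v (k - n)) * z ^ k)
        = (∑ k ∈ T ∪ S.image (· + n), (c * (u k * z ^ k) + c * ((w * v (k - n)) * z ^ k))) from
      Finset.sum_congr rfl (fun k _ => by ring)]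
    rw [Finset.sum_add_distrib, ← Finset.mul_sum, ← Finset.mul_sum, e4, mul_add]
    congr 1
    rw [Finset.mul_sum]

lemma circMap_ne_zero (θ : ℝ) : circMap θ ≠ 0 := Complex.exp_ne_zero _

lemma abs_circMap (θ : ℝ) : ‖circMap θ‖ = 1 := by
  rw [circMap, Complex.norm_exp]
  norm_num [Complex.mul_re, Complex.mul_im]

lemma circMap_zpow (θ : ℝ) (k : ℤ) :
    circMap θ ^ k = Complex.exp (2 * Real.pi * Complex.I * (k * θ)) := by
  rw [circMap, ← Complex.exp_int_mul]
  ring_nf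

lemma integral_exp_int (m : ℤ) :
    (∫ θ in (0:ℝ)..1, Complex.exp (2 * Real.pi * Complex.I * (m * θ)))
      = if m = 0 then 1 else 0 := by
  rcases eq_or_ne m 0 with h | h
  · simp [h]
  · have hc : (2 * Real.pi * Complex.I * m) ≠ 0 := by
      simp [Complex.ext_iff, Real.pi_ne_zero, h, Complex.I_ne_zero]
    have h1 : (∫ θ in (0:ℝ)..1, Complex.exp (2 * Real.pi * Complex.I * (m * θ)))
        = ∫ θ in (0:ℝ)..1, Complex.exp ((2 * Real.pi * Complex.I * m) * θ) := by
      congr 1; ext θ; ring_nf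
    have h2 : Complex.exp (2 * Real.pi * Complex.I * ↑m * 1) = 1 := by
      rw [show (2 * Real.pi * Complex.I * (m:ℂ) * 1) = m * (2 * Real.pi * Complex.I) by ring]
      exact Complex.exp_int_mul_two_pi_mul_I m
    rw [h1, integral_exp_mul_complex hc]
    push_cast
    rw [h2]
    simp [h]

lemma cont_exp (k : ℤ) : Continuous fun θ : ℝ => Complex.exp (2 * Real.pi * Complex.I * (k * θ)) := by
  fun_prop

lemma HasRep.circCoeff_eq {f : ℂ → ℂ} {u : ℤ → ℂ} (h : HasRep f u) (j : ℤ) :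
    circCoeff f j = u j := by
  obtain ⟨T, h0, hs⟩ := h
  have key : ∀ θ : ℝ, f (circMap θ) * Complex.exp (-(2 * Real.pi * Complex.I * j * θ))
      = ∑ k ∈ T, u k * Complex.exp (2 * Real.pi * Complex.I * (((k - j : ℤ) : ℂ) * θ)) := by
    intro θ
    rw [hs _ (circMap_ne_zero θ), Finset.sum_mul]
    apply Finset.sum_congr rfl
    intro k _
    rw [circMap_zpow, mul_assoc, ← Complex.exp_add]
    congr 2
    push_cast
    ring
  rw [circCoeff]
  rw [intervalIntegral.integral_congr (g := fun θ =>
      ∑ k ∈ T, u k * Complex.exp (2 * Real.pi * Complex.I * (((k - j : ℤ) : ℂ) * θ)))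
    (fun θ _ => key θ)]
  rw [intervalIntegral.integral_finset_sum (fun k _ =>
    (Continuous.intervalIntegrable (by fun_prop) _ _))]
  have : ∀ k ∈ T, (∫ θ in (0:ℝ)..1, u k * Complex.exp (2 * Real.pi * Complex.I * (((k - j : ℤ) : ℂ) * θ)))
      = u k * if k - j = 0 then 1 else 0 := by
    intro k _
    rw [intervalIntegral.integral_const_mul, integral_exp_int]
  rw [Finset.sum_congr rfl this]
  have : ∀ k ∈ T, (u k * if k - j = 0 then 1 else 0) = if k = j then u k else 0 := by
    intro k _
    by_cases hkj : k = j <;> simp [hkj, sub_eq_zero]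
  rw [Finset.sum_congr rfl this, Finset.sum_ite_eq' T j u]
  by_cases hj : j ∈ T
  · simp [hj]
  · simp [hj, h0 j hj]

lemma starFun_circMap (g : ℂ → ℂ) (θ : ℝ) :
    starFun g (circMap θ) = starRingEnd ℂ (g (circMap θ)) := by
  rw [starFun]
  congr 2
  rw [circMap, ← Complex.exp_conj, ← Complex.exp_neg]
  congr 1
  simp [Complex.ext_iff]

lemma HasRep.cont {f : ℂ → ℂ} {u : ℤ → ℂ} (h : HasRep f u) :
    Continuous fun θ : ℝ => f (circMap θ) := by
  obtain ⟨T, h0, hs⟩ := h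
  have : (fun θ : ℝ => f (circMap θ))
      = fun θ : ℝ => ∑ k ∈ T, u k * Complex.exp (2 * Real.pi * Complex.I * ((k : ℂ) * θ)) := by
    funext θ
    rw [hs _ (circMap_ne_zero θ)]
    exact Finset.sum_congr rfl fun k _ => by rw [circMap_zpow]
  rw [this]
  exact continuous_finset_sum _ fun k _ => by fun_prop

lemma integral_double (T S : Finset ℤ) (w : ℤ → ℤ → ℂ) (e : ℤ → ℤ → ℤ) :
    (∫ θ in (0:ℝ)..1, ∑ k ∈ T, ∑ l ∈ S,
        w k l * Complex.exp (2 * Real.pi * Complex.I * ((e k l : ℂ) * θ)))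
      = ∑ k ∈ T, ∑ l ∈ S, if e k l = 0 then w k l else 0 := by
  rw [intervalIntegral.integral_finset_sum (fun k _ => Continuous.intervalIntegrable
      (continuous_finset_sum _ fun l _ => by fun_prop) _ _)]
  apply Finset.sum_congr rfl
  intro k _
  rw [intervalIntegral.integral_finset_sum (fun l _ => Continuous.intervalIntegrable
      (by fun_prop) _ _)]
  apply Finset.sum_congr rfl
  intro l _
  rw [intervalIntegral.integral_const_mul, integral_exp_int]
  by_cases h : e k l = 0 <;> simp [h]

lemma circCoeff_zero_eq_integral (f : ℂ → ℂ) :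
    circCoeff f 0 = ∫ θ in (0:ℝ)..1, f (circMap θ) := by
  rw [circCoeff]
  apply intervalIntegral.integral_congr
  intro θ _
  norm_num

lemma circCoeff_mul_zero {f g : ℂ → ℂ} {u v : ℤ → ℂ} (hf : HasRep f u) (hg : HasRep g v)
    (hu : ∀ k, u k ≠ 0 → k ≤ 0) (hv : ∀ k, v k ≠ 0 → k ≤ 0) :
    circCoeff (fun z => f z * g z) 0 = u 0 * v 0 := by
  obtain ⟨T, hT0, hTs⟩ := hf
  obtain ⟨S, hS0, hSs⟩ := hg
  rw [circCoeff_zero_eq_integral]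
  have key : ∀ θ : ℝ, f (circMap θ) * g (circMap θ)
      = ∑ k ∈ T, ∑ l ∈ S, (u k * v l) * Complex.exp (2 * Real.pi * Complex.I * (((k + l : ℤ) : ℂ) * θ)) := by
    intro θ
    rw [hTs _ (circMap_ne_zero θ), hSs _ (circMap_ne_zero θ), Finset.sum_mul_sum]
    apply Finset.sum_congr rfl; intro k _
    apply Finset.sum_congr rfl; intro l _
    rw [circMap_zpow, circMap_zpow]
    have e1 : Complex.exp (2 * Real.pi * Complex.I * ((k : ℂ) * θ))
        * Complex.exp (2 * Real.pi * Complex.I * ((l : ℂ) * θ))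
        = Complex.exp (2 * Real.pi * Complex.I * (((k + l : ℤ) : ℂ) * θ)) := by
      rw [← Complex.exp_add]; congr 1; push_cast; ring
    rw [← e1]; ring
  rw [intervalIntegral.integral_congr (fun θ _ => key θ), integral_double]
  have : ∀ k ∈ T, (∑ l ∈ S, if k + l = 0 then u k * v l else 0)
      = if k = 0 then u 0 * v 0 else 0 := by
    intro k _
    rcases eq_or_ne k 0 with hk | hk
    · subst hk
      simp only [zero_add]
      rw [Finset.sum_ite_eq' S 0 (fun l => u 0 * v l)]
      by_cases h0 : (0:ℤ) ∈ S
      · simp [h0]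
      · simp [h0, hS0 0 h0]
    · rw [if_neg hk]
      apply Finset.sum_eq_zero
      intro l _
      by_cases hkl : k + l = 0
      · rw [if_pos hkl]
        rcases lt_or_ge 0 k with hk2 | hk2
        · have : u k = 0 := by_contra fun h => absurd (hu k h) (by omega)
          rw [this, zero_mul]
        · have hl : 0 < l := by omega
          have : v l = 0 := by_contra fun h => absurd (hv l h) (by omega)
          rw [this, mul_zero]
      · rw [if_neg hkl]
    
  rw [Finset.sum_congr rfl this, Finset.sum_ite_eq' T 0]
  by_cases h0 : (0:ℤ) ∈ T
  · simp [h0]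
  · simp [h0, hT0 0 h0]

lemma circCoeff_mul_star_zero {f g : ℂ → ℂ} {u v : ℤ → ℂ} {c : ℤ} (hf : HasRep f u)
    (hg : HasRep g v) (hu : ∀ k, u k ≠ 0 → k < c) (hv : ∀ k, v k ≠ 0 → c ≤ k) :
    circCoeff (fun z => f z * starFun g z) 0 = 0 := by
  obtain ⟨T, hT0, hTs⟩ := hf
  obtain ⟨S, hS0, hSs⟩ := hg
  rw [circCoeff_zero_eq_integral]
  have key : ∀ θ : ℝ, f (circMap θ) * starFun g (circMap θ)
      = ∑ k ∈ T, ∑ l ∈ S, (u k * starRingEnd ℂ (v l))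
          * Complex.exp (2 * Real.pi * Complex.I * (((k - l : ℤ) : ℂ) * θ)) := by
    intro θ
    rw [starFun_circMap, hTs _ (circMap_ne_zero θ), hSs _ (circMap_ne_zero θ), map_sum,
      Finset.sum_mul_sum]
    apply Finset.sum_congr rfl; intro k _
    apply Finset.sum_congr rfl; intro l _
    rw [map_mul, circMap_zpow, circMap_zpow, ← Complex.exp_conj]
    have : starRingEnd ℂ (2 * Real.pi * Complex.I * ((l : ℂ) * θ))
        = -(2 * Real.pi * Complex.I * ((l : ℂ) * θ)) := by simp [Complex.ext_iff]
    rw [this]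
    have e1 : Complex.exp (2 * Real.pi * Complex.I * ((k : ℂ) * θ))
        * Complex.exp (-(2 * Real.pi * Complex.I * ((l : ℂ) * θ)))
        = Complex.exp (2 * Real.pi * Complex.I * (((k - l : ℤ) : ℂ) * θ)) := by
      rw [← Complex.exp_add]; congr 1; push_cast; ring
    rw [← e1]; ring
  rw [intervalIntegral.integral_congr (fun θ _ => key θ), integral_double]
  apply Finset.sum_eq_zero
  intro k _
  apply Finset.sum_eq_zero
  intro l _
  by_cases hkl : k - l = 0
  · rw [if_pos hkl]
    by_cases hvl : v l = 0
    · rw [hvl, map_zero, mul_zero]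
    · have : u k = 0 := by_contra fun h => absurd (hu k h) (by have := hv l hvl; omega)
      rw [this, zero_mul]
  · rw [if_neg hkl]

/-- The normalization constant of the `n`-th factor. -/
def cc (F : ℤ → ℂ) (n : ℤ) : ℝ := (Real.sqrt (1 + ‖F n‖ ^ 2))⁻¹

lemma cc_pos (F : ℤ → ℂ) (n : ℤ) : 0 < cc F n := by
  rw [cc]
  positivity

lemma cc_sq (F : ℤ → ℂ) (n : ℤ) : (cc F n : ℝ) ^ 2 * (1 + ‖F n‖ ^ 2) = 1 := by
  rw [cc, inv_pow, Real.sq_sqrt (by positivity)]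
  field_simp

lemma factor_apply (F : ℤ → ℂ) (n : ℤ) (z : ℂ) :
    nlftFactor F n z = ((cc F n : ℝ) : ℂ) •
      !![1, F n * z ^ n; -(starRingEnd ℂ (F n)) * z ^ (-n), 1] := rfl

lemma factor00 (F : ℤ → ℂ) (n : ℤ) (z : ℂ) :
    nlftFactor F n z 0 0 = ((cc F n : ℝ) : ℂ) := by
  simp [factor_apply]

lemma factor01 (F : ℤ → ℂ) (n : ℤ) (z : ℂ) :
    nlftFactor F n z 0 1 = ((cc F n : ℝ) : ℂ) * (F n * z ^ n) := by
  simp [factor_apply]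

lemma factor10 (F : ℤ → ℂ) (n : ℤ) (z : ℂ) :
    nlftFactor F n z 1 0 = ((cc F n : ℝ) : ℂ) * (-(starRingEnd ℂ (F n)) * z ^ (-n)) := by
  simp [factor_apply]

lemma factor11 (F : ℤ → ℂ) (n : ℤ) (z : ℂ) :
    nlftFactor F n z 1 1 = ((cc F n : ℝ) : ℂ) := by
  simp [factor_apply]

lemma factor_of_zero (F : ℤ → ℂ) (n : ℤ) (z : ℂ) (h : F n = 0) :
    nlftFactor F n z = 1 := by
  have hc : cc F n = 1 := by rw [cc, h]; simp
  rw [factor_apply, hc, h]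
  ext i j
  fin_cases i <;> fin_cases j <;> simp [Matrix.one_apply]

def Qprod (F : ℤ → ℂ) (K : ℕ) (m : ℕ) (z : ℂ) : Matrix (Fin 2) (Fin 2) ℂ :=
  (((List.range m).map (fun j : ℕ => nlftFactor F ((j : ℤ) - (K : ℤ)) z)).prod)

def Sprod (F : ℤ → ℂ) (K : ℕ) (m : ℕ) (z : ℂ) : Matrix (Fin 2) (Fin 2) ℂ :=
  (((List.range m).map (fun j : ℕ => nlftFactor F ((K : ℤ) - (m : ℤ) + 1 + (j : ℤ)) z)).prod)

lemma Qprod_succ (F : ℤ → ℂ) (K : ℕ) (m : ℕ) (z : ℂ) :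
    Qprod F K (m + 1) z = Qprod F K m z * nlftFactor F ((m : ℤ) - (K : ℤ)) z := by
  rw [Qprod, Qprod, List.range_succ, List.map_append, List.prod_append]
  simp

lemma Sprod_succ (F : ℤ → ℂ) (K : ℕ) (m : ℕ) (z : ℂ) :
    Sprod F K (m + 1) z = nlftFactor F ((K : ℤ) - (m : ℤ)) z * Sprod F K m z := by
  rw [Sprod, Sprod, List.range_succ_eq_map, List.map_cons, List.prod_cons, List.map_map]
  congr 2
  · push_cast; ring_nf
  · apply List.map_congr_left
    intro j _
    simp only [Function.comp_apply]
    congr 1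
    push_cast; ring

lemma nlftPartial_eq (F : ℤ → ℂ) (K : ℕ) (z : ℂ) : nlftPartial F K z
    = (((List.range (2 * K + 1)).map (fun j : ℕ => nlftFactor F ((j : ℤ) - (K : ℤ)) z)).prod) := by
  rw [nlftPartial]
  congr 1
  simp [List.map_eq_flatMap, List.flatMap_assoc]

lemma Qprod_eq_nlftPartial (F : ℤ → ℂ) (K : ℕ) (z : ℂ) :
    Qprod F K (2 * K + 1) z = nlftPartial F K z := (nlftPartial_eq F K z).symm

lemma Sprod_eq_nlftPartial (F : ℤ → ℂ) (K : ℕ) (z : ℂ) :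
    Sprod F K (2 * K + 1) z = nlftPartial F K z := by
  rw [Sprod, nlftPartial_eq]
  apply congrArg
  apply List.map_congr_left
  intro j _
  congr 1
  push_cast; ring

lemma HasRep.coeff_congr {f : ℂ → ℂ} {u u' : ℤ → ℂ} (h : HasRep f u) (h2 : ∀ k, u k = u' k) :
    HasRep f u' := (funext h2 : u = u') ▸ h

lemma mul00 (M N : Matrix (Fin 2) (Fin 2) ℂ) :
    (M * N) 0 0 = M 0 0 * N 0 0 + M 0 1 * N 1 0 := by
  simp [Matrix.mul_apply, Fin.sum_univ_two]

lemma mul01 (M N : Matrix (Fin 2) (Fin 2) ℂ) :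
    (M * N) 0 1 = M 0 0 * N 0 1 + M 0 1 * N 1 1 := by
  simp [Matrix.mul_apply, Fin.sum_univ_two]

lemma mul10 (M N : Matrix (Fin 2) (Fin 2) ℂ) :
    (M * N) 1 0 = M 1 0 * N 0 0 + M 1 1 * N 1 0 := by
  simp [Matrix.mul_apply, Fin.sum_univ_two]

lemma mul11 (M N : Matrix (Fin 2) (Fin 2) ℂ) :
    (M * N) 1 1 = M 1 0 * N 0 1 + M 1 1 * N 1 1 := by
  simp [Matrix.mul_apply, Fin.sum_univ_two]

lemma Qprod_zero (F : ℤ → ℂ) (K : ℕ) (z : ℂ) : Qprod F K 0 z = 1 := by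
  simp [Qprod]

lemma Sprod_zero (F : ℤ → ℂ) (K : ℕ) (z : ℂ) : Sprod F K 0 z = 1 := by
  simp [Sprod]

lemma lemR (F : ℤ → ℂ) (K : ℕ) (hi : ℤ) (hhi : ∀ n, F n ≠ 0 → n ≤ hi) (m : ℕ) :
    ∃ (u v : ℤ → ℂ) (r : ℝ), 0 < r ∧ u 0 = (r : ℂ) ∧
      HasRep (fun z => Qprod F K m z 0 0) u ∧ HasRep (fun z => Qprod F K m z 0 1) v ∧
      (∀ k, u k ≠ 0 → k ≤ 0) ∧ (∀ k, v k ≠ 0 → k ≤ hi ∧ k < (m : ℤ) - K) := by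
  induction m with
  | zero =>
    refine ⟨fun k => if k = 0 then 1 else 0, 0, 1, one_pos, by simp, ⟨{0}, ?_, ?_⟩,
      ⟨∅, by simp, ?_⟩, ?_, by simp⟩
    · intro k hk; simp only [Finset.mem_singleton] at hk; simp [hk]
    · intro z hz; simp [Qprod_zero, Matrix.one_apply]
    · intro z hz; simp [Qprod_zero, Matrix.one_apply]
    · intro k hk; by_contra hk2; apply hk; simp; omega
  | succ m ih =>
    obtain ⟨u, v, r, hr, hu0, hA, hB, hu, hv⟩ := ih
    refine ⟨fun k => ((cc F ((m:ℤ)-K) : ℝ) : ℂ) * (u k + (-(starRingEnd ℂ (F ((m:ℤ)-K)))) * v (k - -((m:ℤ)-K))),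
      fun k => ((cc F ((m:ℤ)-K) : ℝ) : ℂ) * (v k + F ((m:ℤ)-K) * u (k - ((m:ℤ)-K))),
      r * cc F ((m:ℤ)-K), mul_pos hr (cc_pos F _), ?_, ?_, ?_, ?_, ?_⟩
    · -- u' 0 = r * cc
      have hvn : v (0 - -((m:ℤ)-K)) = 0 := by
        by_contra h
        have := (hv _ h).2
        omega
      dsimp only
      rw [hvn, hu0]
      push_cast
      ring
    · -- HasRep of new a
      apply (rep_step hA hB (((cc F ((m:ℤ)-K) : ℝ) : ℂ)) (-(starRingEnd ℂ (F ((m:ℤ)-K)))) (-((m:ℤ)-K))).congr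
      intro z hz
      rw [Qprod_succ, mul00, factor00, factor10]
      ring
    · -- HasRep of new b
      apply (rep_step hB hA (((cc F ((m:ℤ)-K) : ℝ) : ℂ)) (F ((m:ℤ)-K)) ((m:ℤ)-K)).congr
      intro z hz
      rw [Qprod_succ, mul01, factor01, factor11]
      ring
    · -- support of new u
      intro k hk
      by_contra hk2
      push_neg at hk2
      apply hk
      have h1 : u k = 0 := by
        by_contra h; exact absurd (hu k h) (by omega)
      have h2 : v (k - -((m:ℤ)-K)) = 0 := by
        by_contra h; have := (hv _ h).2; omega
      dsimp only
      rw [h1, h2]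
      simp
    · -- support of new v
      intro k hk
      have h1 : v k ≠ 0 ∨ F ((m:ℤ)-K) * u (k - ((m:ℤ)-K)) ≠ 0 := by
        by_contra h
        push_neg at h
        apply hk
        dsimp only
        rw [h.1, h.2]
        ring
      rcases h1 with h | h
      · exact ⟨(hv k h).1, by have := (hv k h).2; push_cast; omega⟩
      · rcases mul_ne_zero_iff.1 h with ⟨hF, hu2⟩
        have h2 := hhi _ hF
        have h3 := hu _ hu2
        constructor
        · omega
        · push_cast; omega

lemma lemL (F : ℤ → ℂ) (K : ℕ) (lo : ℤ) (hlo : ∀ n, F n ≠ 0 → lo ≤ n) (m : ℕ) :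
    ∃ (u v : ℤ → ℂ),
      HasRep (fun z => Sprod F K m z 0 0) u ∧ HasRep (fun z => Sprod F K m z 0 1) v ∧
      HasRep (fun z => Sprod F K m z 1 0) (fun k => -(starRingEnd ℂ (v (-k)))) ∧
      HasRep (fun z => Sprod F K m z 1 1) (fun k => starRingEnd ℂ (u (-k))) ∧
      (∀ k, u k ≠ 0 → k ≤ 0) ∧ (∀ k, v k ≠ 0 → lo ≤ k ∧ (K : ℤ) - m + 1 ≤ k) := by
  induction m with
  | zero =>
    refine ⟨fun k => if k = 0 then 1 else 0, 0, ⟨{0}, ?_, ?_⟩, ⟨∅, by simp, ?_⟩,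
      ⟨∅, by simp, ?_⟩, ⟨{0}, ?_, ?_⟩, ?_, by simp⟩
    · intro k hk; simp only [Finset.mem_singleton] at hk; simp [hk]
    · intro z hz; simp [Sprod_zero, Matrix.one_apply]
    · intro z hz; simp [Sprod_zero, Matrix.one_apply]
    · intro z hz; simp [Sprod_zero, Matrix.one_apply]
    · intro k hk; simp only [Finset.mem_singleton] at hk
      have : -k ≠ 0 := fun h => hk (by omega)
      simp [this]
    · intro z hz; simp [Sprod_zero, Matrix.one_apply]
    · intro k hk; by_contra hk2; apply hk; simp; omega
  | succ m ih =>
    obtain ⟨u, v, hA, hB, hC, hD, hu, hv⟩ := ih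
    refine ⟨fun k => ((cc F ((K:ℤ)-m) : ℝ) : ℂ) * (u k + F ((K:ℤ)-m) * -(starRingEnd ℂ (v (-(k - ((K:ℤ)-m)))))),
      fun k => ((cc F ((K:ℤ)-m) : ℝ) : ℂ) * (v k + F ((K:ℤ)-m) * starRingEnd ℂ (u (-(k - ((K:ℤ)-m))))),
      ?_, ?_, ?_, ?_, ?_, ?_⟩
    · apply (rep_step hA hC (((cc F ((K:ℤ)-m) : ℝ) : ℂ)) (F ((K:ℤ)-m)) ((K:ℤ)-m)).congr
      intro z hz
      rw [Sprod_succ, mul00, factor00, factor01]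
      ring
    · apply (rep_step hB hD (((cc F ((K:ℤ)-m) : ℝ) : ℂ)) (F ((K:ℤ)-m)) ((K:ℤ)-m)).congr
      intro z hz
      rw [Sprod_succ, mul01, factor00, factor01]
      ring
    · apply ((rep_step hC hA (((cc F ((K:ℤ)-m) : ℝ) : ℂ)) (-(starRingEnd ℂ (F ((K:ℤ)-m)))) (-((K:ℤ)-m))).congr
        ?_).coeff_congr ?_
      · intro z hz
        rw [Sprod_succ, mul10, factor10, factor11]
        ring
      · intro k
        dsimp only
        simp only [map_mul, map_add, map_neg, Complex.conj_conj, Complex.conj_ofReal,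
          neg_neg, sub_neg_eq_add, neg_sub]
        ring_nf
    · apply ((rep_step hD hB (((cc F ((K:ℤ)-m) : ℝ) : ℂ))
          (-(starRingEnd ℂ (F ((K:ℤ)-m)))) (-((K:ℤ)-m))).congr ?_).coeff_congr ?_
      · intro z hz
        rw [Sprod_succ, mul11, factor10, factor11]
        ring
      · intro k
        dsimp only
        simp only [map_mul, map_add, map_neg, Complex.conj_conj, Complex.conj_ofReal,
          neg_neg, sub_neg_eq_add, neg_sub]
        ring_nf
    · -- support of new u
      intro k hk
      by_contra hk2
      push_neg at hk2
      apply hk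
      have h1 : u k = 0 := by
        by_contra h; exact absurd (hu k h) (by omega)
      have h2 : v (-(k - ((K:ℤ)-m))) = 0 := by
        by_contra h; have := (hv _ h).2; omega
      dsimp only
      rw [h1, h2]
      simp
    · -- support of new v
      intro k hk
      have h1 : v k ≠ 0 ∨ F ((K:ℤ)-m) * starRingEnd ℂ (u (-(k - ((K:ℤ)-m)))) ≠ 0 := by
        by_contra h
        push_neg at h
        apply hk
        dsimp only
        rw [h.1, h.2]
        ring
      rcases h1 with h | h
      · exact ⟨(hv k h).1, by have := (hv k h).2; push_cast; omega⟩
      · rcases mul_ne_zero_iff.1 h with ⟨hF, hu2⟩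
        rw [← map_zero (starRingEnd ℂ)] at hu2
        have hu3 : u (-(k - ((K:ℤ)-m))) ≠ 0 := fun h2 => hu2 (by rw [h2])
        have h2 := hlo _ hF
        have h3 := hu _ hu3
        constructor
        · omega
        · push_cast; omega

lemma conj_zpow_circ {z : ℂ} (hz : ‖z‖ = 1) (n : ℤ) :
    starRingEnd ℂ (z ^ n) = z ^ (-n) := by
  have hz0 : z ≠ 0 := by
    intro h; rw [h] at hz; simp at hz
  rw [map_zpow₀, ← Complex.inv_eq_conj hz, inv_zpow, ← zpow_neg]

lemma normSq_zpow_circ {z : ℂ} (hz : ‖z‖ = 1) (n : ℤ) :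
    Complex.normSq (z ^ n) = 1 := by
  rw [← Complex.sq_norm, norm_zpow, hz]
  simp

lemma normsum (F : ℤ → ℂ) (K : ℕ) (m : ℕ) {z : ℂ} (hz : ‖z‖ = 1) :
    ‖Qprod F K m z 0 0‖ ^ 2 + ‖Qprod F K m z 0 1‖ ^ 2 = 1 := by
  induction m with
  | zero => simp [Qprod_zero, Matrix.one_apply]
  | succ m ih =>
    rw [Qprod_succ, mul00, mul01, factor00, factor01, factor10, factor11]
    set A := Qprod F K m z 0 0
    set B := Qprod F K m z 0 1
    set n : ℤ := (m : ℤ) - K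
    set c : ℝ := cc F n
    rw [Complex.sq_norm, Complex.sq_norm]
    have e1 : A * ↑c + B * (↑c * (-(starRingEnd ℂ) (F n) * z ^ (-n)))
        = ↑c * (A + (-(starRingEnd ℂ) (F n) * z ^ (-n)) * B) := by ring
    have e2 : A * (↑c * (F n * z ^ n)) + B * ↑c = ↑c * ((F n * z ^ n) * A + B) := by ring
    rw [e1, e2, Complex.normSq_mul, Complex.normSq_mul]
    have hw : starRingEnd ℂ (-(starRingEnd ℂ) (F n) * z ^ (-n)) = -(F n * z ^ n) := by
      rw [map_mul, map_neg, Complex.conj_conj, conj_zpow_circ hz, neg_neg]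
      ring_nf
    have key : Complex.normSq (A + (-(starRingEnd ℂ) (F n) * z ^ (-n)) * B)
        + Complex.normSq ((F n * z ^ n) * A + B)
        = (1 + ‖F n‖ ^ 2) * (Complex.normSq A + Complex.normSq B) := by
      rw [Complex.normSq_add, Complex.normSq_add]
      have c1 : (A * starRingEnd ℂ (-(starRingEnd ℂ) (F n) * z ^ (-n) * B)).re
          = -((F n * z ^ n * A * starRingEnd ℂ B).re) := by
        have e : A * starRingEnd ℂ (-(starRingEnd ℂ) (F n) * z ^ (-n) * B)
            = -(F n * z ^ n * A * starRingEnd ℂ B) := by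
          rw [map_mul, hw]; ring
        rw [e, Complex.neg_re]
      have c2 : Complex.normSq (F n * z ^ n * A)
          = Complex.normSq (F n) * Complex.normSq A := by
        rw [Complex.normSq_mul, Complex.normSq_mul, normSq_zpow_circ hz]; ring
      have c3 : Complex.normSq (-(starRingEnd ℂ) (F n) * z ^ (-n) * B)
          = Complex.normSq (F n) * Complex.normSq B := by
        rw [Complex.normSq_mul, Complex.normSq_mul, Complex.normSq_neg, Complex.normSq_conj,
          normSq_zpow_circ hz]
        ring
      rw [c1, c2, c3, ← Complex.sq_norm (F n)]
      ring
    rw [← mul_add, key]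
    have hAB : Complex.normSq A + Complex.normSq B = 1 := by
      rw [← Complex.sq_norm, ← Complex.sq_norm]; exact ih
    rw [hAB, mul_one, Complex.normSq_ofReal]
    linear_combination cc_sq F n

lemma abs_entries_le_one (F : ℤ → ℂ) (K : ℕ) (m : ℕ) {z : ℂ} (hz : ‖z‖ = 1) :
    ‖Qprod F K m z 0 0‖ ≤ 1 ∧ ‖Qprod F K m z 0 1‖ ≤ 1 := by
  have h := normsum F K m hz
  constructor <;> nlinarith [norm_nonneg (Qprod F K m z 0 0),
    norm_nonneg (Qprod F K m z 0 1)]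

instance : IsFiniteMeasure (volume.restrict (Set.Ioc (0:ℝ) 1)) := by
  constructor
  rw [Measure.restrict_apply_univ]
  exact measure_Ioc_lt_top

lemma memLp_of_bdd {u : ℝ → ℂ} (hu : Continuous u) (C : ℝ) (hC : ∀ θ, ‖u θ‖ ≤ C) :
    MemLp u 2 (volume.restrict (Set.Ioc (0:ℝ) 1)) := by
  apply MemLp.mono_exponent (q := ⊤) _ le_top
  apply memLp_top_of_bound hu.aestronglyMeasurable C
  exact ae_of_all _ (fun θ => hC θ)

lemma sqrt_integral_eq {u : ℝ → ℂ} (hu : MemLp u 2 (volume.restrict (Set.Ioc (0:ℝ) 1))) :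
    Real.sqrt (∫ θ in (0:ℝ)..1, ‖u θ‖ ^ 2)
      = (eLpNorm u 2 (volume.restrict (Set.Ioc (0:ℝ) 1))).toReal := by
  rw [hu.eLpNorm_eq_integral_rpow_norm (by norm_num) (by norm_num)]
  rw [ENNReal.toReal_ofReal (by positivity)]
  rw [intervalIntegral.integral_of_le zero_le_one]
  have h2 : ((2 : ℝ≥0∞).toReal) = (2 : ℝ) := by simp
  rw [h2]
  have h3 : (∫ a, ‖u a‖ ^ (2:ℝ) ∂(volume.restrict (Set.Ioc (0:ℝ) 1)))
      = ∫ θ in Set.Ioc (0:ℝ) 1, ‖u θ‖ ^ 2 := by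
    apply integral_congr_ae
    apply ae_of_all
    intro θ
    dsimp only
    rw [show ((2:ℝ)) = ((2:ℕ):ℝ) by norm_num, Real.rpow_natCast]
  rw [h3, Real.sqrt_eq_rpow]
  norm_num

lemma L2_four_bound {v v₁ v₂ v₃ v₄ : ℝ → ℂ}
    (hv : Continuous v) (h₁ : Continuous v₁) (h₂ : Continuous v₂) (h₃ : Continuous v₃)
    (h₄ : Continuous v₄)
    (hb₁ : ∀ θ, ‖v₁ θ‖ ≤ 2) (hb₂ : ∀ θ, ‖v₂ θ‖ ≤ 2)
    (hb₃ : ∀ θ, ‖v₃ θ‖ ≤ 2) (hb₄ : ∀ θ, ‖v₄ θ‖ ≤ 2)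
    (hpt : ∀ θ, ‖v θ‖ ≤ ‖v₁ θ‖ + ‖v₂ θ‖
      + ‖v₃ θ‖ + ‖v₄ θ‖) :
    Real.sqrt (∫ θ in (0:ℝ)..1, ‖v θ‖ ^ 2)
      ≤ Real.sqrt (∫ θ in (0:ℝ)..1, ‖v₁ θ‖ ^ 2)
        + Real.sqrt (∫ θ in (0:ℝ)..1, ‖v₂ θ‖ ^ 2)
        + Real.sqrt (∫ θ in (0:ℝ)..1, ‖v₃ θ‖ ^ 2)
        + Real.sqrt (∫ θ in (0:ℝ)..1, ‖v₄ θ‖ ^ 2) := by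
  set μ := volume.restrict (Set.Ioc (0:ℝ) 1)
  have hvb : ∀ θ, ‖v θ‖ ≤ 8 := fun θ =>
    (hpt θ).trans (by linarith [hb₁ θ, hb₂ θ, hb₃ θ, hb₄ θ])
  have m0 := memLp_of_bdd hv 8 hvb
  have m1 := memLp_of_bdd h₁ 2 hb₁
  have m2 := memLp_of_bdd h₂ 2 hb₂
  have m3 := memLp_of_bdd h₃ 2 hb₃
  have m4 := memLp_of_bdd h₄ 2 hb₄
  rw [sqrt_integral_eq m0, sqrt_integral_eq m1, sqrt_integral_eq m2, sqrt_integral_eq m3,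
    sqrt_integral_eq m4]
  have key : eLpNorm v 2 μ ≤ eLpNorm v₁ 2 μ + eLpNorm v₂ 2 μ + eLpNorm v₃ 2 μ
      + eLpNorm v₄ 2 μ := by
    have step1 : eLpNorm v 2 μ ≤ eLpNorm
        (fun θ => ‖v₁ θ‖ + ‖v₂ θ‖ + ‖v₃ θ‖
          + ‖v₄ θ‖) 2 μ := by
      apply eLpNorm_mono
      intro θ
      rw [Real.norm_of_nonneg (by positivity)]
      exact hpt θ
    apply step1.trans
    have c1 : Continuous fun θ => ‖v₁ θ‖ := continuous_norm.comp h₁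
    have c2 : Continuous fun θ => ‖v₂ θ‖ := continuous_norm.comp h₂
    have c3 : Continuous fun θ => ‖v₃ θ‖ := continuous_norm.comp h₃
    have c4 : Continuous fun θ => ‖v₄ θ‖ := continuous_norm.comp h₄
    have t1 : eLpNorm (fun θ => ‖v₁ θ‖ + ‖v₂ θ‖ + ‖v₃ θ‖
        + ‖v₄ θ‖) 2 μ
        ≤ eLpNorm (fun θ => ‖v₁ θ‖ + ‖v₂ θ‖ + ‖v₃ θ‖) 2 μ
          + eLpNorm (fun θ => ‖v₄ θ‖) 2 μ :=
      eLpNorm_add_le ((c1.add c2).add c3).aestronglyMeasurable c4.aestronglyMeasurable one_le_two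
    have t2 : eLpNorm (fun θ => ‖v₁ θ‖ + ‖v₂ θ‖ + ‖v₃ θ‖) 2 μ
        ≤ eLpNorm (fun θ => ‖v₁ θ‖ + ‖v₂ θ‖) 2 μ
          + eLpNorm (fun θ => ‖v₃ θ‖) 2 μ :=
      eLpNorm_add_le (c1.add c2).aestronglyMeasurable c3.aestronglyMeasurable one_le_two
    have t3 : eLpNorm (fun θ => ‖v₁ θ‖ + ‖v₂ θ‖) 2 μ
        ≤ eLpNorm (fun θ => ‖v₁ θ‖) 2 μ + eLpNorm (fun θ => ‖v₂ θ‖) 2 μ :=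
      eLpNorm_add_le c1.aestronglyMeasurable c2.aestronglyMeasurable one_le_two
    have habs : ∀ w : ℝ → ℂ, eLpNorm (fun θ => ‖w θ‖) 2 μ = eLpNorm w 2 μ := by
      intro w
      rw [← eLpNorm_norm w]
    simp only [habs] at t1 t2 t3
    calc eLpNorm (fun θ => ‖v₁ θ‖ + ‖v₂ θ‖ + ‖v₃ θ‖
        + ‖v₄ θ‖) 2 μ ≤ _ := t1
    _ ≤ _ := by
        apply add_le_add_left
        apply t2.trans
        apply add_le_add_left t3
  have fin : eLpNorm v₁ 2 μ + eLpNorm v₂ 2 μ + eLpNorm v₃ 2 μ + eLpNorm v₄ 2 μ ≠ ⊤ := by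
    simp only [ne_eq, ENNReal.add_eq_top, not_or]
    exact ⟨⟨⟨m1.2.ne, m2.2.ne⟩, m3.2.ne⟩, m4.2.ne⟩
  refine (ENNReal.toReal_mono fin key).trans_eq ?_
  rw [ENNReal.toReal_add (ENNReal.add_ne_top.2 ⟨ENNReal.add_ne_top.2 ⟨m1.2.ne, m2.2.ne⟩, m3.2.ne⟩)
    m4.2.ne, ENNReal.toReal_add (ENNReal.add_ne_top.2 ⟨m1.2.ne, m2.2.ne⟩) m3.2.ne,
    ENNReal.toReal_add m1.2.ne m2.2.ne]


lemma suppBound_le (X : ℤ → ℂ) (hX : (Function.support X).Finite) :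
    ∀ n, X n ≠ 0 → n ≤ (suppBound X : ℤ) := by
  intro n hn
  rw [suppBound, dif_pos hX]
  have : n.natAbs ≤ hX.toFinset.sup (fun n => n.natAbs) :=
    Finset.le_sup (by simp [Function.mem_support, hn])
  omega

lemma nlftA_eq (X : ℤ → ℂ) (z : ℂ) :
    nlftA X z = Qprod X (suppBound X) (2 * suppBound X + 1) z 0 0 := by
  rw [nlftA, nlft, ← Qprod_eq_nlftPartial]

lemma nlftB_eq (X : ℤ → ℂ) (z : ℂ) :
    nlftB X z = Qprod X (suppBound X) (2 * suppBound X + 1) z 0 1 := by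
  rw [nlftB, nlft, ← Qprod_eq_nlftPartial]

lemma nlftB_eqS (X : ℤ → ℂ) (z : ℂ) :
    nlftB X z = Sprod X (suppBound X) (2 * suppBound X + 1) z 0 1 := by
  rw [nlftB, nlft, ← Sprod_eq_nlftPartial]

lemma nlft_repR (X : ℤ → ℂ) (hi : ℤ) (hhi : ∀ n, X n ≠ 0 → n ≤ hi) :
    ∃ (u v : ℤ → ℂ) (r : ℝ), 0 < r ∧ u 0 = (r : ℂ) ∧ HasRep (nlftA X) u ∧
      HasRep (nlftB X) v ∧ (∀ k, u k ≠ 0 → k ≤ 0) ∧ (∀ k, v k ≠ 0 → k ≤ hi) := by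
  obtain ⟨u, v, r, hr, hu0, hA, hB, hu, hv⟩ := lemR X (suppBound X) hi hhi (2 * suppBound X + 1)
  exact ⟨u, v, r, hr, hu0, hA.congr (fun z _ => (nlftA_eq X z).symm),
    hB.congr (fun z _ => (nlftB_eq X z).symm), hu, fun k hk => (hv k hk).1⟩

lemma nlft_repL (X : ℤ → ℂ) (lo : ℤ) (hlo : ∀ n, X n ≠ 0 → lo ≤ n) :
    ∃ v : ℤ → ℂ, HasRep (nlftB X) v ∧ (∀ k, v k ≠ 0 → lo ≤ k) := by
  obtain ⟨u, v, hA, hB, hC, hD, hu, hv⟩ := lemL X (suppBound X) lo hlo (2 * suppBound X + 1)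
  exact ⟨v, hB.congr (fun z _ => (nlftB_eqS X z).symm), fun k hk => (hv k hk).1⟩

lemma nlftA_abs_le (X : ℤ → ℂ) (θ : ℝ) : ‖nlftA X (circMap θ)‖ ≤ 1 := by
  rw [nlftA_eq]
  exact (abs_entries_le_one X _ _ (abs_circMap θ)).1

lemma nlftB_abs_le (X : ℤ → ℂ) (θ : ℝ) : ‖nlftB X (circMap θ)‖ ≤ 1 := by
  rw [nlftB_eq]
  exact (abs_entries_le_one X _ _ (abs_circMap θ)).2

lemma exists_cut (F F' G G' : ℤ → ℂ)
    (hF : (Function.support F).Finite) (hF' : (Function.support F').Finite)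
    (hG : (Function.support G).Finite) (hG' : (Function.support G').Finite)
    (horder : ∀ m ∈ Function.support F ∪ Function.support F',
      ∀ n ∈ Function.support G ∪ Function.support G', m < n) :
    ∃ n₀ : ℤ, (∀ m, F m ≠ 0 → m < n₀) ∧ (∀ m, F' m ≠ 0 → m < n₀) ∧
      (∀ n, G n ≠ 0 → n₀ ≤ n) ∧ (∀ n, G' n ≠ 0 → n₀ ≤ n) := by
  by_cases hne : ((hG.union hG').toFinset).Nonempty
  · set n₀ := (hG.union hG').toFinset.min' hne with hn₀
    have hmem : n₀ ∈ Function.support G ∪ Function.support G' := by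
      have := (hG.union hG').toFinset.min'_mem hne
      rwa [Set.Finite.mem_toFinset] at this
    refine ⟨n₀, fun m hm => horder m (Set.mem_union_left _ hm) n₀ hmem,
      fun m hm => horder m (Set.mem_union_right _ hm) n₀ hmem, fun n hn => ?_, fun n hn => ?_⟩
    · exact Finset.min'_le _ _ (by rw [Set.Finite.mem_toFinset]; exact Set.mem_union_left _ hn)
    · exact Finset.min'_le _ _ (by rw [Set.Finite.mem_toFinset]; exact Set.mem_union_right _ hn)
  · have hempty : ∀ n : ℤ, n ∈ Function.support G ∪ Function.support G' → False := by
      intro n hn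
      exact hne ⟨n, (Set.Finite.mem_toFinset _).2 hn⟩
    refine ⟨max (suppBound F) (suppBound F') + 1, fun m hm => ?_, fun m hm => ?_,
      fun n hn => absurd (hempty n (Set.mem_union_left _ hn)) not_false,
      fun n hn => absurd (hempty n (Set.mem_union_right _ hn)) not_false⟩
    · have := suppBound_le F hF m hm
      omega
    · have := suppBound_le F' hF' m hm
      omega


lemma abs_sub_le2 {x y : ℂ} (hx : ‖x‖ ≤ 1) (hy : ‖y‖ ≤ 1) :
    ‖x - y‖ ≤ 2 := by
  exact (norm_sub_le x y).trans (by linarith)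

lemma abs_comb_le {x1 y1 x2 y2 x3 y3 x4 y4 : ℂ} (h1 : ‖y1‖ ≤ 1)
    (h2 : ‖x2‖ ≤ 1) (h3 : ‖y3‖ ≤ 1) (h4 : ‖x4‖ ≤ 1) :
    ‖x1 * y1 + x2 * y2 - (x3 * y3 + x4 * y4)‖
      ≤ ‖x1‖ + ‖y2‖ + ‖x3‖ + ‖y4‖ := by
  calc ‖x1 * y1 + x2 * y2 - (x3 * y3 + x4 * y4)‖
      ≤ ‖x1 * y1 + x2 * y2‖ + ‖x3 * y3 + x4 * y4‖ := norm_sub_le _ _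
    _ ≤ (‖x1 * y1‖ + ‖x2 * y2‖) + (‖x3 * y3‖ + ‖x4 * y4‖) :=
        add_le_add (norm_add_le _ _) (norm_add_le _ _)
    _ ≤ (‖x1‖ * 1 + 1 * ‖y2‖) + (‖x3‖ * 1 + 1 * ‖y4‖) := by
        rw [norm_mul, norm_mul, norm_mul, norm_mul]
        gcongr <;> simp [norm_nonneg]
    _ = ‖x1‖ + ‖y2‖ + ‖x3‖ + ‖y4‖ := by ring

lemma abs_comb_le' {x1 y1 x2 y2 x3 y3 x4 y4 : ℂ} (h1 : ‖y1‖ ≤ 1)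
    (h2 : ‖x2‖ ≤ 1) (h3 : ‖y3‖ ≤ 1) (h4 : ‖x4‖ ≤ 1) :
    ‖x1 * y1 + x2 * y2 + (x3 * y3 + x4 * y4)‖
      ≤ ‖x1‖ + ‖y2‖ + ‖x3‖ + ‖y4‖ := by
  have := abs_comb_le (x3 := -x3) (x1 := x1) (y1 := y1) (x2 := x2) (y2 := y2)
    (y3 := y3) (x4 := -x4) (y4 := y4) h1 h2 h3 (by rwa [norm_neg])
  rw [show x1 * y1 + x2 * y2 - (-x3 * y3 + -x4 * y4)
    = x1 * y1 + x2 * y2 + (x3 * y3 + x4 * y4) by ring, norm_neg] at this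
  exact this

lemma circCoeff_sub (f g : ℂ → ℂ) (hf : Continuous fun θ : ℝ => f (circMap θ))
    (hg : Continuous fun θ : ℝ => g (circMap θ)) :
    circCoeff (fun z => f z - g z) 0 = circCoeff f 0 - circCoeff g 0 := by
  rw [circCoeff_zero_eq_integral, circCoeff_zero_eq_integral, circCoeff_zero_eq_integral]
  exact intervalIntegral.integral_sub (hf.intervalIntegrable _ _) (hg.intervalIntegrable _ _)

lemma cont_starFun {g : ℂ → ℂ} (hg : Continuous fun θ : ℝ => g (circMap θ)) :
    Continuous fun θ : ℝ => starFun g (circMap θ) := by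
  have e : (fun θ : ℝ => starFun g (circMap θ)) = fun θ : ℝ => starRingEnd ℂ (g (circMap θ)) :=
    funext fun θ => starFun_circMap g θ
  rw [e]
  exact RCLike.continuous_conj.comp hg

lemma abs_starFun (g : ℂ → ℂ) (θ : ℝ) :
    ‖starFun g (circMap θ)‖ = ‖g (circMap θ)‖ := by
  rw [starFun_circMap, Complex.norm_conj]

lemma starFun_sub_circ (g g' : ℂ → ℂ) (θ : ℝ) :
    ‖starFun g (circMap θ) - starFun g' (circMap θ)‖
      = ‖g (circMap θ) - g' (circMap θ)‖ := by
  rw [starFun_circMap, starFun_circMap, ← map_sub, Complex.norm_conj]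

/-- Theorem `rhoproduct` of the paper: compatibility of the metric
`ρ` with the product of nonlinear Fourier series of sequences with separated
supports. -/
theorem rho_submultiplicative (F F' G G' : ℤ → ℂ)
    (hF : (Function.support F).Finite) (hF' : (Function.support F').Finite)
    (hG : (Function.support G).Finite) (hG' : (Function.support G').Finite)
    (horder : ∀ m ∈ Function.support F ∪ Function.support F',
      ∀ n ∈ Function.support G ∪ Function.support G', m < n) :
    rhoDist (pairProd (nlftPair F) (nlftPair G)) (pairProd (nlftPair F') (nlftPair G')) ≤
      2 * rhoDist (nlftPair F) (nlftPair F') + 2 * rhoDist (nlftPair G) (nlftPair G') := by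
  obtain ⟨n₀, hF1, hF'1, hG1, hG'1⟩ := exists_cut F F' G G' hF hF' hG hG' horder
  obtain ⟨uF, vF, rF, hrF, huF0, hAF, hBF, huF, hvF⟩ :=
    nlft_repR F (n₀ - 1) (fun n hn => by have := hF1 n hn; omega)
  obtain ⟨uF', vF', rF', hrF', huF'0, hAF', hBF', huF', hvF'⟩ :=
    nlft_repR F' (n₀ - 1) (fun n hn => by have := hF'1 n hn; omega)
  obtain ⟨uG, vG, rG, hrG, huG0, hAG, hBG, huG, hvG⟩ :=
    nlft_repR G (suppBound G : ℤ) (suppBound_le G hG)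
  obtain ⟨uG', vG', rG', hrG', huG'0, hAG', hBG', huG', hvG'⟩ :=
    nlft_repR G' (suppBound G' : ℤ) (suppBound_le G' hG')
  obtain ⟨wG, hBGL, hwG⟩ := nlft_repL G n₀ hG1
  obtain ⟨wG', hBG'L, hwG'⟩ := nlft_repL G' n₀ hG'1
  have cAF : Continuous fun θ : ℝ => nlftA F (circMap θ) := hAF.cont
  have cBF : Continuous fun θ : ℝ => nlftB F (circMap θ) := hBF.cont
  have cAF' : Continuous fun θ : ℝ => nlftA F' (circMap θ) := hAF'.cont
  have cBF' : Continuous fun θ : ℝ => nlftB F' (circMap θ) := hBF'.cont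
  have cAG : Continuous fun θ : ℝ => nlftA G (circMap θ) := hAG.cont
  have cBG : Continuous fun θ : ℝ => nlftB G (circMap θ) := hBG.cont
  have cAG' : Continuous fun θ : ℝ => nlftA G' (circMap θ) := hAG'.cont
  have cBG' : Continuous fun θ : ℝ => nlftB G' (circMap θ) := hBG'.cont
  -- the two L² bounds
  have hL1 : circL2dist (fun z => nlftA F z * nlftA G z - nlftB F z * starFun (nlftB G) z)
      (fun z => nlftA F' z * nlftA G' z - nlftB F' z * starFun (nlftB G') z)
      ≤ circL2dist (nlftA F) (nlftA F') + circL2dist (nlftB F) (nlftB F')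
        + circL2dist (nlftA G) (nlftA G') + circL2dist (nlftB G) (nlftB G') := by
    have key := L2_four_bound
      (v := fun θ => (nlftA F (circMap θ) * nlftA G (circMap θ)
        - nlftB F (circMap θ) * starFun (nlftB G) (circMap θ))
        - (nlftA F' (circMap θ) * nlftA G' (circMap θ)
          - nlftB F' (circMap θ) * starFun (nlftB G') (circMap θ)))
      (v₁ := fun θ => nlftA F (circMap θ) - nlftA F' (circMap θ))
      (v₂ := fun θ => nlftB F (circMap θ) - nlftB F' (circMap θ))
      (v₃ := fun θ => nlftA G (circMap θ) - nlftA G' (circMap θ))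
      (v₄ := fun θ => nlftB G (circMap θ) - nlftB G' (circMap θ))
      (((cAF.mul cAG).sub (cBF.mul (cont_starFun cBG))).sub
        ((cAF'.mul cAG').sub (cBF'.mul (cont_starFun cBG'))))
      (cAF.sub cAF') (cBF.sub cBF') (cAG.sub cAG') (cBG.sub cBG')
      (fun θ => abs_sub_le2 (nlftA_abs_le F θ) (nlftA_abs_le F' θ))
      (fun θ => abs_sub_le2 (nlftB_abs_le F θ) (nlftB_abs_le F' θ))
      (fun θ => abs_sub_le2 (nlftA_abs_le G θ) (nlftA_abs_le G' θ))
      (fun θ => abs_sub_le2 (nlftB_abs_le G θ) (nlftB_abs_le G' θ))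
      (fun θ => by
        have e : (nlftA F (circMap θ) * nlftA G (circMap θ)
            - nlftB F (circMap θ) * starFun (nlftB G) (circMap θ))
            - (nlftA F' (circMap θ) * nlftA G' (circMap θ)
              - nlftB F' (circMap θ) * starFun (nlftB G') (circMap θ))
            = (nlftA F (circMap θ) - nlftA F' (circMap θ)) * nlftA G (circMap θ)
              + nlftA F' (circMap θ) * (nlftA G (circMap θ) - nlftA G' (circMap θ))
              - ((nlftB F (circMap θ) - nlftB F' (circMap θ)) * starFun (nlftB G) (circMap θ)
                + nlftB F' (circMap θ)
                  * (starFun (nlftB G) (circMap θ) - starFun (nlftB G') (circMap θ))) := by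
          ring
        rw [e]
        have h := abs_comb_le (x1 := nlftA F (circMap θ) - nlftA F' (circMap θ))
          (x2 := nlftA F' (circMap θ)) (x3 := nlftB F (circMap θ) - nlftB F' (circMap θ))
          (x4 := nlftB F' (circMap θ))
          (y2 := nlftA G (circMap θ) - nlftA G' (circMap θ))
          (y4 := starFun (nlftB G) (circMap θ) - starFun (nlftB G') (circMap θ))
          (nlftA_abs_le G θ) (nlftA_abs_le F' θ)
          (by rw [abs_starFun]; exact nlftB_abs_le G θ) (nlftB_abs_le F' θ)
        rw [starFun_sub_circ] at h
        linarith [h])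
    exact key
  have hL2 : circL2dist (fun z => nlftA F z * nlftB G z + nlftB F z * starFun (nlftA G) z)
      (fun z => nlftA F' z * nlftB G' z + nlftB F' z * starFun (nlftA G') z)
      ≤ circL2dist (nlftA F) (nlftA F') + circL2dist (nlftB F) (nlftB F')
        + circL2dist (nlftA G) (nlftA G') + circL2dist (nlftB G) (nlftB G') := by
    have key := L2_four_bound
      (v := fun θ => (nlftA F (circMap θ) * nlftB G (circMap θ)
        + nlftB F (circMap θ) * starFun (nlftA G) (circMap θ))
        - (nlftA F' (circMap θ) * nlftB G' (circMap θ)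
          + nlftB F' (circMap θ) * starFun (nlftA G') (circMap θ)))
      (v₁ := fun θ => nlftA F (circMap θ) - nlftA F' (circMap θ))
      (v₂ := fun θ => nlftB F (circMap θ) - nlftB F' (circMap θ))
      (v₃ := fun θ => nlftA G (circMap θ) - nlftA G' (circMap θ))
      (v₄ := fun θ => nlftB G (circMap θ) - nlftB G' (circMap θ))
      (((cAF.mul cBG).add (cBF.mul (cont_starFun cAG))).sub
        ((cAF'.mul cBG').add (cBF'.mul (cont_starFun cAG'))))
      (cAF.sub cAF') (cBF.sub cBF') (cAG.sub cAG') (cBG.sub cBG')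
      (fun θ => abs_sub_le2 (nlftA_abs_le F θ) (nlftA_abs_le F' θ))
      (fun θ => abs_sub_le2 (nlftB_abs_le F θ) (nlftB_abs_le F' θ))
      (fun θ => abs_sub_le2 (nlftA_abs_le G θ) (nlftA_abs_le G' θ))
      (fun θ => abs_sub_le2 (nlftB_abs_le G θ) (nlftB_abs_le G' θ))
      (fun θ => by
        have e : (nlftA F (circMap θ) * nlftB G (circMap θ)
            + nlftB F (circMap θ) * starFun (nlftA G) (circMap θ))
            - (nlftA F' (circMap θ) * nlftB G' (circMap θ)
              + nlftB F' (circMap θ) * starFun (nlftA G') (circMap θ))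
            = (nlftA F (circMap θ) - nlftA F' (circMap θ)) * nlftB G (circMap θ)
              + nlftA F' (circMap θ) * (nlftB G (circMap θ) - nlftB G' (circMap θ))
              + ((nlftB F (circMap θ) - nlftB F' (circMap θ)) * starFun (nlftA G) (circMap θ)
                + nlftB F' (circMap θ)
                  * (starFun (nlftA G) (circMap θ) - starFun (nlftA G') (circMap θ))) := by
          ring
        rw [e]
        have h := abs_comb_le' (x1 := nlftA F (circMap θ) - nlftA F' (circMap θ))
          (x2 := nlftA F' (circMap θ)) (x3 := nlftB F (circMap θ) - nlftB F' (circMap θ))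
          (x4 := nlftB F' (circMap θ))
          (y2 := nlftB G (circMap θ) - nlftB G' (circMap θ))
          (y4 := starFun (nlftA G) (circMap θ) - starFun (nlftA G') (circMap θ))
          (nlftB_abs_le G θ) (nlftA_abs_le F' θ)
          (by rw [abs_starFun]; exact nlftA_abs_le G θ) (nlftB_abs_le F' θ)
        rw [starFun_sub_circ] at h
        linarith [h])
    exact key
  -- the constant coefficients
  have hprod : circCoeff (fun z => nlftA F z * nlftA G z - nlftB F z * starFun (nlftB G) z) 0
      = ((rF * rG : ℝ) : ℂ) := by
    rw [circCoeff_sub _ _ (cAF.mul cAG) (cBF.mul (cont_starFun cBG)),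
      circCoeff_mul_zero hAF hAG huF huG,
      circCoeff_mul_star_zero (c := n₀) hBF hBGL (fun k hk => by have := hvF k hk; omega) hwG,
      huF0, huG0]
    push_cast
    ring
  have hprod' : circCoeff (fun z => nlftA F' z * nlftA G' z - nlftB F' z * starFun (nlftB G') z) 0
      = ((rF' * rG' : ℝ) : ℂ) := by
    rw [circCoeff_sub _ _ (cAF'.mul cAG') (cBF'.mul (cont_starFun cBG')),
      circCoeff_mul_zero hAF' hAG' huF' huG',
      circCoeff_mul_star_zero (c := n₀) hBF' hBG'L (fun k hk => by have := hvF' k hk; omega) hwG',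
      huF'0, huG'0]
    push_cast
    ring
  have habs : ∀ r : ℝ, 0 < r → ‖((r : ℝ) : ℂ)‖ = r := fun r hr => by
    rw [Complex.norm_real, Real.norm_eq_abs, abs_of_pos hr]
  -- put everything together
  rw [rhoDist, rhoDist, rhoDist]
  simp only [pairProd, nlftPair]
  rw [hprod, hprod', hAF.circCoeff_eq, hAF'.circCoeff_eq, hAG.circCoeff_eq, hAG'.circCoeff_eq,
    huF0, huG0, huF'0, huG'0, habs _ (mul_pos hrF hrG), habs _ (mul_pos hrF' hrG'),
    habs _ hrF, habs _ hrF', habs _ hrG, habs _ hrG',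
    Real.log_mul hrF.ne' hrG.ne', Real.log_mul hrF'.ne' hrG'.ne']
  have hlog : |Real.log rF + Real.log rG - (Real.log rF' + Real.log rG')|
      ≤ |Real.log rF - Real.log rF'| + |Real.log rG - Real.log rG'| := by
    have := abs_add_le (Real.log rF - Real.log rF') (Real.log rG - Real.log rG')
    rw [show Real.log rF - Real.log rF' + (Real.log rG - Real.log rG')
      = Real.log rF + Real.log rG - (Real.log rF' + Real.log rG') by ring] at this
    exact this
  have n1 : 0 ≤ circL2dist (nlftA F) (nlftA F') := Real.sqrt_nonneg _
  have n2 : 0 ≤ circL2dist (nlftB F) (nlftB F') := Real.sqrt_nonneg _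
  have n3 : 0 ≤ circL2dist (nlftA G) (nlftA G') := Real.sqrt_nonneg _
  have n4 : 0 ≤ circL2dist (nlftB G) (nlftB G') := Real.sqrt_nonneg _
  have n5 : 0 ≤ |Real.log rF - Real.log rF'| := abs_nonneg _
  have n6 : 0 ≤ |Real.log rG - Real.log rG'| := abs_nonneg _
  linarith [hL1, hL2, hlog]

end
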